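/- Every proper biharmonic arc-length curve γ in the Cartan-Vranceanu space (M, ds²_{ℓ,m}) with ℓ² ≠ 4m and m ≠ 0 is a helix: both its geodesic curvature k and geodesic torsion τ are constant. Moreover N3 = 0 along γ. -/

import Mathlib

noncomputable section

/-- every proper biharmonic arc-length curve of the
Cartan-Vranceanu space `(M, ds²_{ℓ,m})` with `ℓ² ≠ 4m`, `m ≠ 0` is a helix:
its geodesic curvature `k` (constant by hypothesis) and its geodesic torsion
`τ` are constant; moreover `N3 = 0` along the curve. -/
theorem proper_biharmonic_is_helix (l m : ℝ) (hm : m ≠ 0) (hlm : l^2 ≠ 4*m)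
    (k τ N3 B3 : ℝ → ℝ)
    (hτd : Differentiable ℝ τ) (hB3d : Differentiable ℝ B3)
    (c : ℝ) (hc : c ≠ 0) (hk : ∀ t, k t = c)
    (h2 : ∀ t, (k t)^2 + (τ t)^2 = l^2/4 - (l^2 - 4*m) * (B3 t)^2)
    (h3 : ∀ t, deriv τ t = (l^2 - 4*m) * N3 t * B3 t)
    (h4 : ∀ t, τ t * N3 t = deriv B3 t - (l/2) * N3 t)
    (hB3 : ∀ t, B3 t ≠ 0) :
    (∃ c' : ℝ, ∀ t, τ t = c') ∧ (∀ t, N3 t = 0) := by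
  have hlm' : l ^ 2 - 4 * m ≠ 0 := sub_ne_zero.mpr hlm
  -- F is constant
  have hF : ∀ t, (τ t) ^ 2 + (l ^ 2 - 4 * m) * (B3 t) ^ 2 = l ^ 2 / 4 - c ^ 2 := by
    intro t
    have h := h2 t
    rw [hk t] at h
    linarith
  have hFd : ∀ t, HasDerivAt (fun t => (τ t) ^ 2 + (l ^ 2 - 4 * m) * (B3 t) ^ 2)
      (2 * τ t * deriv τ t + (l ^ 2 - 4 * m) * (2 * B3 t * deriv B3 t)) t := by
    intro t
    have h1 := ((hτd t).hasDerivAt).fun_pow 2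
    have h2' := (((hB3d t).hasDerivAt).fun_pow 2).const_mul (l ^ 2 - 4 * m)
    have h := h1.fun_add h2'
    refine h.congr_deriv ?_
    push_cast
    ring
  have hFeq : (fun t => (τ t) ^ 2 + (l ^ 2 - 4 * m) * (B3 t) ^ 2)
      = fun _ => l ^ 2 / 4 - c ^ 2 := funext hF
  have hder0 : ∀ t, 2 * τ t * deriv τ t + (l ^ 2 - 4 * m) * (2 * B3 t * deriv B3 t) = 0 := by
    intro t
    have h := (hFd t).deriv
    rw [hFeq] at h
    simpa using h.symm
  -- τ N3 + B3' = 0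
  have hkey : ∀ t, τ t * N3 t + deriv B3 t = 0 := by
    intro t
    have h := hder0 t
    rw [h3 t] at h
    have hprod : (l ^ 2 - 4 * m) * (2 * B3 t) * (τ t * N3 t + deriv B3 t) = 0 := by
      linear_combination h
    rcases mul_eq_zero.mp hprod with h' | h'
    · rcases mul_eq_zero.mp h' with h'' | h''
      · exact absurd h'' hlm'
      · exact absurd h'' (by simpa using hB3 t)
    · exact h'
  -- N3 (4τ + l) = 0
  have hN3g : ∀ t, N3 t * (4 * τ t + l) = 0 := by
    intro t
    have h := h4 t
    have h' := hkey t
    linear_combination 2 * h + 2 * h'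
  -- (4τ+l)^2 has zero derivative
  have hGd : ∀ t, HasDerivAt (fun t => (4 * τ t + l) ^ 2) 0 t := by
    intro t
    have h := ((((hτd t).hasDerivAt).const_mul 4).add_const l).pow 2
    have e : (2 : ℝ) * (4 * τ t + l) ^ (2 - 1) * (4 * deriv τ t) = 0 := by
      rw [h3 t]
      linear_combination 8 * (l ^ 2 - 4 * m) * B3 t * hN3g t
    rw [show ((2 : ℕ) : ℝ) = (2 : ℝ) by norm_num] at h
    exact e ▸ h
  have hGconst : ∀ s t : ℝ, (4 * τ s + l) ^ 2 = (4 * τ t + l) ^ 2 :=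
    is_const_of_deriv_eq_zero (fun t => (hGd t).differentiableAt)
      (fun t => (hGd t).deriv)
  by_cases hg : 4 * τ 0 + l = 0
  · -- g ≡ 0, τ constant = -l/4
    have hτc : ∀ t, τ t = -l / 4 := by
      intro t
      have h := hGconst t 0
      rw [hg] at h
      have h' : 4 * τ t + l = 0 := by simpa using h
      linarith
    have hτeq : τ = fun _ => -l / 4 := funext hτc
    have hderτ : ∀ t, deriv τ t = 0 := by
      intro t; rw [hτeq]; simp
    have hN3 : ∀ t, N3 t = 0 := by
      intro t
      have h := h3 t
      rw [hderτ t] at h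
      rcases mul_eq_zero.mp h.symm with h' | h'
      · rcases mul_eq_zero.mp h' with h'' | h''
        · exact absurd h'' hlm'
        · exact h''
      · exact absurd h' (hB3 t)
    exact ⟨⟨-l / 4, hτc⟩, hN3⟩
  · -- g never zero, so N3 ≡ 0
    have hN3 : ∀ t, N3 t = 0 := by
      intro t
      have hgt : 4 * τ t + l ≠ 0 := by
        intro h0
        apply hg
        have h := hGconst 0 t
        rw [h0] at h
        have h' : 4 * τ 0 + l = 0 := by simpa using h
        linarith
      rcases mul_eq_zero.mp (hN3g t) with h' | h'
      · exact h'
      · exact absurd h' hgt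
    have hderτ : ∀ t, deriv τ t = 0 := by
      intro t
      rw [h3 t, hN3 t]
      ring
    have hτc : ∀ t, τ t = τ 0 :=
      fun t => is_const_of_deriv_eq_zero hτd hderτ t 0
    exact ⟨⟨τ 0, hτc⟩, hN3⟩
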